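/- Let 0 < α < 2, B = B(α) = 2 - α - √(4-2α+α²), and r < 2B/(B+2). Then the function w(v,m) = v^{r/B} m^{r/2} is convex on the domain {v > 0, m > 0}. -/

import Mathlib

open Set

private lemma combo_pos' {t s x y : ℝ} (ht : 0 ≤ t) (hs : 0 ≤ s) (hts : t + s = 1)
    (hx : 0 < x) (hy : 0 < y) : 0 < t * x + s * y := by
  rcases eq_or_lt_of_le ht with h | h
  · have hs1 : s = 1 := by linarith
    simp [← h, hs1, hy]
  · exact add_pos_of_pos_of_nonneg (mul_pos h hx) (mul_nonneg hs hy.le)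

private lemma hconv_ineq (u : ℝ) (hu : 1 ≤ u) (v1 m1 v2 m2 t s : ℝ)
    (hv1 : 0 < v1) (hm1 : 0 < m1) (hv2 : 0 < v2) (hm2 : 0 < m2)
    (ht : 0 ≤ t) (hs : 0 ≤ s) (hts : t + s = 1) :
    (t * v1 + s * v2) ^ u * (t * m1 + s * m2) ^ (1 - u) ≤
      t * (v1 ^ u * m1 ^ (1 - u)) + s * (v2 ^ u * m2 ^ (1 - u)) := by
  set M := t * m1 + s * m2 with hMdef
  have hM0 : 0 < M := combo_pos' ht hs hts hm1 hm2
  have hV0 : 0 ≤ t * v1 + s * v2 := (combo_pos' ht hs hts hv1 hv2).le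
  have jensen := (convexOn_rpow hu).2
      (show v1 / m1 ∈ Ici (0:ℝ) from mem_Ici.mpr (by positivity))
      (show v2 / m2 ∈ Ici (0:ℝ) from mem_Ici.mpr (by positivity))
      (show (0:ℝ) ≤ t * m1 / M by positivity)
      (show (0:ℝ) ≤ s * m2 / M by positivity)
      (show t * m1 / M + s * m2 / M = 1 by field_simp; exact hMdef.symm)
  simp only [smul_eq_mul] at jensen
  have e1 : t * m1 / M * (v1 / m1) + s * m2 / M * (v2 / m2) = (t * v1 + s * v2) / M := by
    field_simp
  rw [e1] at jensen
  have := mul_le_mul_of_nonneg_left jensen hM0.le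
  calc (t * v1 + s * v2) ^ u * M ^ (1 - u)
      = M * (((t * v1 + s * v2) / M) ^ u) := by
        rw [Real.div_rpow hV0 hM0.le, Real.rpow_sub hM0, Real.rpow_one]; ring
    _ ≤ M * (t * m1 / M * (v1 / m1) ^ u + s * m2 / M * (v2 / m2) ^ u) := this
    _ = t * (m1 * (v1 / m1) ^ u) + s * (m2 * (v2 / m2) ^ u) := by
        field_simp
    _ = t * (v1 ^ u * m1 ^ (1 - u)) + s * (v2 ^ u * m2 ^ (1 - u)) := by
        rw [Real.div_rpow hv1.le hm1.le, Real.div_rpow hv2.le hm2.le,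
          Real.rpow_sub hm1, Real.rpow_sub hm2, Real.rpow_one, Real.rpow_one]; ring

private lemma prod_rpow_convex (a b : ℝ) (hab : 1 < a + b) (hb : b < 0) :
    ConvexOn ℝ {p : ℝ × ℝ | 0 < p.1 ∧ 0 < p.2}
      (fun p : ℝ × ℝ => p.1 ^ a * p.2 ^ b) := by
  have hc0 : 0 < a + b := by linarith
  set c := a + b with hcdef
  set u := a / c with hudef
  have hu : 1 < u := (one_lt_div hc0).mpr (by linarith)
  have huc : u * c = a := div_mul_cancel₀ a hc0.ne'
  have hbc : (1 - u) * c = b := by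
    have : (1 - u) * c = c - u * c := by ring
    rw [this, huc]; linarith [hcdef]
  have hw : ∀ v m : ℝ, 0 < v → 0 < m →
      v ^ a * m ^ b = (v ^ u * m ^ (1 - u)) ^ c := by
    intro v m hv hm
    rw [Real.mul_rpow (by positivity) (by positivity), ← Real.rpow_mul hv.le,
      ← Real.rpow_mul hm.le, huc, hbc]
  constructor
  · exact (convex_Ioi (0 : ℝ)).prod (convex_Ioi 0)
  · intro x hx y hy t s ht hs hts
    obtain ⟨hx1, hx2⟩ := hx
    obtain ⟨hy1, hy2⟩ := hy
    have hz1 : 0 < t * x.1 + s * y.1 := combo_pos' ht hs hts hx1 hy1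
    have hz2 : 0 < t * x.2 + s * y.2 := combo_pos' ht hs hts hx2 hy2
    simp only [smul_eq_mul, Prod.fst_add, Prod.snd_add, Prod.smul_fst, Prod.smul_snd]
    have hhx : (0:ℝ) ≤ x.1 ^ u * x.2 ^ (1 - u) := by positivity
    have hhy : (0:ℝ) ≤ y.1 ^ u * y.2 ^ (1 - u) := by positivity
    calc (t * x.1 + s * y.1) ^ a * (t * x.2 + s * y.2) ^ b
        = ((t * x.1 + s * y.1) ^ u * (t * x.2 + s * y.2) ^ (1 - u)) ^ c :=
          hw _ _ hz1 hz2
      _ ≤ (t * (x.1 ^ u * x.2 ^ (1 - u)) + s * (y.1 ^ u * y.2 ^ (1 - u))) ^ c := by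
          apply Real.rpow_le_rpow (by positivity)
            (hconv_ineq u hu.le _ _ _ _ _ _ hx1 hx2 hy1 hy2 ht hs hts) hc0.le
      _ ≤ t * (x.1 ^ u * x.2 ^ (1 - u)) ^ c + s * (y.1 ^ u * y.2 ^ (1 - u)) ^ c := by
          have := (convexOn_rpow (le_of_lt (by linarith : (1:ℝ) < c))).2
            (mem_Ici.mpr hhx) (mem_Ici.mpr hhy) ht hs hts
          simpa using this
      _ = t * (x.1 ^ a * x.2 ^ b) + s * (y.1 ^ a * y.2 ^ b) := by
          rw [← hw _ _ hx1 hx2, ← hw _ _ hy1 hy2]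

noncomputable def Bcoef (α : ℝ) : ℝ := 2 - α - Real.sqrt (4 - 2 * α + α ^ 2)

/-- for 0 < α < 2 and r < 2B/(B+2) with B = B(α),
w(v,m) = v^{r/B} m^{r/2} is convex on the open quadrant {v > 0, m > 0}. -/
theorem w_convex (α r : ℝ) (hα0 : 0 < α) (hα2 : α < 2)
    (hr : r < 2 * Bcoef α / (Bcoef α + 2)) :
    ConvexOn ℝ {p : ℝ × ℝ | 0 < p.1 ∧ 0 < p.2}
      (fun p : ℝ × ℝ => p.1 ^ (r / Bcoef α) * p.2 ^ (r / 2)) := by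
  set B := Bcoef α with hBdef
  have hsq : Real.sqrt (4 - 2 * α + α ^ 2) ^ 2 = 4 - 2 * α + α ^ 2 :=
    Real.sq_sqrt (by nlinarith)
  have hsnn : 0 ≤ Real.sqrt (4 - 2 * α + α ^ 2) := Real.sqrt_nonneg _
  have hB : B < 0 := by
    rw [hBdef]; unfold Bcoef; nlinarith
  have hB2 : 0 < B + 2 := by
    rw [hBdef]; unfold Bcoef; nlinarith
  have hr' : r * (B + 2) < 2 * B := (lt_div_iff₀ hB2).mp hr
  have hrneg : r < 0 := by nlinarith
  apply prod_rpow_convex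
  · rw [div_add_div _ _ hB.ne two_ne_zero]
    rw [one_lt_div_of_neg (by nlinarith : B * 2 < 0)]
    nlinarith
  · linarith
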